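/- Let T₃ : ℝ⁴ × ℝ⁴ × ℝ⁴ → ℝ be the trilinear form T₃(x,y,z) = (z₁+z₂)(x₁y₁ + x₁y₂ + x₂y₁ − x₂y₂) + (z₁−z₂)(x₃y₃ + x₃y₄ + x₄y₃ − x₄y₄), where ℝ⁴ carries the sup norm. Then ‖T₃‖ = 4 and Σ_{i₁=1}^{4} ( Σ_{i₂,i₃=1}^{4} |T₃(e_{i₁},e_{i₂},e_{i₃})|² )^{1/2} = 8, where e₁,...,e₄ are the standard basis vectors of ℝ⁴; hence any valid constant C for the trilinear mixed (ℓ₁,ℓ₂)-Littlewood inequality satisfies C ≥ 2. -/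

import Mathlib

lemma key_abs_littlewood (u v b : ℝ) (hu : |u| ≤ b) (hv : |v| ≤ b) :
    |u + v| + |u - v| ≤ 2 * b := by
  rw [abs_le] at hu hv
  rcases abs_cases (u + v) with ⟨h, _⟩ | ⟨h, _⟩ <;>
    rcases abs_cases (u - v) with ⟨h', _⟩ | ⟨h', _⟩ <;> linarith

lemma T3_pointwise_bound (x y z : Fin 4 → ℝ) :
    |(z 0 + z 1) * (x 0 * y 0 + x 0 * y 1 + x 1 * y 0 - x 1 * y 1)
      + (z 0 - z 1) * (x 2 * y 2 + x 2 * y 3 + x 3 * y 2 - x 3 * y 3)|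
      ≤ 4 * (‖x‖ * ‖y‖ * ‖z‖) := by
  have hx : ∀ i, |x i| ≤ ‖x‖ := fun i => norm_le_pi_norm x i
  have hy : ∀ i, |y i| ≤ ‖y‖ := fun i => norm_le_pi_norm y i
  have hz : ∀ i, |z i| ≤ ‖z‖ := fun i => norm_le_pi_norm z i
  have hy01 := key_abs_littlewood (y 0) (y 1) ‖y‖ (hy 0) (hy 1)
  have hy23 := key_abs_littlewood (y 2) (y 3) ‖y‖ (hy 2) (hy 3)
  have hz01 := key_abs_littlewood (z 0) (z 1) ‖z‖ (hz 0) (hz 1)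
  have hxn : (0:ℝ) ≤ ‖x‖ := norm_nonneg x
  have hyn : (0:ℝ) ≤ ‖y‖ := norm_nonneg y
  have hA : |x 0 * y 0 + x 0 * y 1 + x 1 * y 0 - x 1 * y 1| ≤ ‖x‖ * (2 * ‖y‖) := by
    have h : x 0 * y 0 + x 0 * y 1 + x 1 * y 0 - x 1 * y 1
        = x 0 * (y 0 + y 1) + x 1 * (y 0 - y 1) := by ring
    rw [h]
    calc |x 0 * (y 0 + y 1) + x 1 * (y 0 - y 1)|
        ≤ |x 0| * |y 0 + y 1| + |x 1| * |y 0 - y 1| := by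
          rw [← abs_mul, ← abs_mul]; exact abs_add_le _ _
      _ ≤ ‖x‖ * |y 0 + y 1| + ‖x‖ * |y 0 - y 1| := by
          gcongr <;> [exact hx 0; exact hx 1]
      _ = ‖x‖ * (|y 0 + y 1| + |y 0 - y 1|) := by ring
      _ ≤ ‖x‖ * (2 * ‖y‖) := by gcongr
  have hB : |x 2 * y 2 + x 2 * y 3 + x 3 * y 2 - x 3 * y 3| ≤ ‖x‖ * (2 * ‖y‖) := by
    have h : x 2 * y 2 + x 2 * y 3 + x 3 * y 2 - x 3 * y 3
        = x 2 * (y 2 + y 3) + x 3 * (y 2 - y 3) := by ring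
    rw [h]
    calc |x 2 * (y 2 + y 3) + x 3 * (y 2 - y 3)|
        ≤ |x 2| * |y 2 + y 3| + |x 3| * |y 2 - y 3| := by
          rw [← abs_mul, ← abs_mul]; exact abs_add_le _ _
      _ ≤ ‖x‖ * |y 2 + y 3| + ‖x‖ * |y 2 - y 3| := by
          gcongr <;> [exact hx 2; exact hx 3]
      _ = ‖x‖ * (|y 2 + y 3| + |y 2 - y 3|) := by ring
      _ ≤ ‖x‖ * (2 * ‖y‖) := by gcongr
  calc |(z 0 + z 1) * (x 0 * y 0 + x 0 * y 1 + x 1 * y 0 - x 1 * y 1)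
      + (z 0 - z 1) * (x 2 * y 2 + x 2 * y 3 + x 3 * y 2 - x 3 * y 3)|
      ≤ |z 0 + z 1| * |x 0 * y 0 + x 0 * y 1 + x 1 * y 0 - x 1 * y 1|
        + |z 0 - z 1| * |x 2 * y 2 + x 2 * y 3 + x 3 * y 2 - x 3 * y 3| := by
        rw [← abs_mul, ← abs_mul]; exact abs_add_le _ _
    _ ≤ |z 0 + z 1| * (‖x‖ * (2 * ‖y‖)) + |z 0 - z 1| * (‖x‖ * (2 * ‖y‖)) :=
        add_le_add (mul_le_mul_of_nonneg_left hA (abs_nonneg _))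
          (mul_le_mul_of_nonneg_left hB (abs_nonneg _))
    _ = (|z 0 + z 1| + |z 0 - z 1|) * (‖x‖ * (2 * ‖y‖)) := by ring
    _ ≤ (2 * ‖z‖) * (‖x‖ * (2 * ‖y‖)) :=
        mul_le_mul_of_nonneg_right hz01 (by positivity)
    _ = 4 * (‖x‖ * ‖y‖ * ‖z‖) := by ring

/-- For the trilinear form
`T₃(x,y,z) = (z₁+z₂)(x₁y₁+x₁y₂+x₂y₁−x₂y₂) + (z₁−z₂)(x₃y₃+x₃y₄+x₄y₃−x₄y₄)` on
`(ℝ⁴)³` (sup norm), one has `‖T₃‖ = 4` and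
`∑_{i₁=1}^{4} (∑_{i₂,i₃=1}^{4} |T₃(e_{i₁},e_{i₂},e_{i₃})|²)^{1/2} = 8`; hence
every valid constant `C ≥ 0` of the trilinear mixed `(ℓ₁,ℓ₂)`-Littlewood
inequality satisfies `C ≥ 2`. -/
theorem T3_norm_sum_and_lower_bound
    (T₃ : ContinuousMultilinearMap ℝ (fun _ : Fin 3 => (Fin 4 → ℝ)) ℝ)
    (hT : ∀ x y z : Fin 4 → ℝ,
      T₃ ![x, y, z] = (z 0 + z 1) * (x 0 * y 0 + x 0 * y 1 + x 1 * y 0 - x 1 * y 1)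
        + (z 0 - z 1) * (x 2 * y 2 + x 2 * y 3 + x 3 * y 2 - x 3 * y 3)) :
    ‖T₃‖ = 4 ∧
    (∑ i₁ : Fin 4, Real.sqrt (∑ i₂ : Fin 4, ∑ i₃ : Fin 4,
        |T₃ ![Pi.single i₁ 1, Pi.single i₂ 1, Pi.single i₃ 1]| ^ 2) = 8) ∧
    ∀ C : ℝ, 0 ≤ C →
      (∀ N : ℕ, 0 < N →
        ∀ U : ContinuousMultilinearMap ℝ (fun _ : Fin 3 => (Fin N → ℝ)) ℝ,
          ∑ j₁ : Fin N, Real.sqrt (∑ j₂ : Fin N, ∑ j₃ : Fin N,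
              |U ![Pi.single j₁ 1, Pi.single j₂ 1, Pi.single j₃ 1]| ^ 2)
            ≤ C * ‖U‖) →
      2 ≤ C := by
  have hnorm : ‖T₃‖ = 4 := by
    have hub : ‖T₃‖ ≤ 4 := by
      apply T₃.opNorm_le_bound (by norm_num)
      intro m
      have hm : m = ![m 0, m 1, m 2] := by funext i; fin_cases i <;> rfl
      rw [hm, hT, Fin.prod_univ_three]
      simpa using T3_pointwise_bound (m 0) (m 1) (m 2)
    have hlb : (4:ℝ) ≤ ‖T₃‖ := by
      have h := T₃.le_opNorm ![(fun _ => 1), (fun _ => 1), ![1,0,0,0]]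
      rw [hT, Fin.prod_univ_three] at h
      have h1 : ‖(fun _ : Fin 4 => (1:ℝ))‖ = 1 := by rw [pi_norm_const]; norm_num
      have h2 : ‖(![1,0,0,0] : Fin 4 → ℝ)‖ ≤ 1 := by
        rw [pi_norm_le_iff_of_nonneg (by norm_num)]
        intro i; fin_cases i <;> norm_num
      simp only [Matrix.cons_val_zero, Matrix.cons_val_one, Matrix.head_cons, h1] at h
      norm_num at h
      simp only [Matrix.cons_val_two, Matrix.tail_cons, Matrix.head_cons] at h
      nlinarith [norm_nonneg T₃, h, h2]
    linarith
  have hsum : (∑ i₁ : Fin 4, Real.sqrt (∑ i₂ : Fin 4, ∑ i₃ : Fin 4,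
      |T₃ ![Pi.single i₁ 1, Pi.single i₂ 1, Pi.single i₃ 1]| ^ 2) = 8) := by
    have h4 : Real.sqrt 4 = 2 := by
      rw [show (4:ℝ) = 2^2 by norm_num, Real.sqrt_sq (by norm_num)]
    simp only [Fin.sum_univ_four, hT, Pi.single_apply]
    simp only [Fin.reduceEq, if_true, if_false]
    norm_num [h4]
  refine ⟨hnorm, hsum, ?_⟩
  intro C _ hC
  have h := hC 4 (by norm_num) T₃
  rw [hsum, hnorm] at h
  linarith
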